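/- Let k be a real number with |k| > 2(ρ,θ) (equivalently, |k| > 2(h^∨ − 1)). Then for all distinct w, w' ∈ W one has w(ρ) − w'(ρ) ∉ kΓ; that is, the points w·0 = w(ρ) − ρ for w ∈ W remain pairwise distinct modulo the lattice kΓ. -/

import Mathlib

open RealInnerProductSpace

noncomputable section

namespace S9

variable {E : Type} [NormedAddCommGroup E] [InnerProductSpace ℝ E] [FiniteDimensional ℝ E]

/-- A reduced irreducible crystallographic root system spanning a finite-dimensional real
inner product space `E`, together with a fixed system of positive roots and the highest
root `θ`, normalized so that `⟪θ, θ⟫ = 2`. -/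
structure RootSystemData (E : Type) [NormedAddCommGroup E] [InnerProductSpace ℝ E]
    [FiniteDimensional ℝ E] where
  /-- The finite set of roots. -/
  Φ : Finset E
  zero_not_mem : (0 : E) ∉ Φ
  span_eq_top : Submodule.span ℝ (Φ : Set E) = ⊤
  neg_mem : ∀ α ∈ Φ, -α ∈ Φ
  /-- The root system is reduced. -/
  reduced : ∀ α ∈ Φ, ∀ c : ℝ, c • α ∈ Φ → c = 1 ∨ c = -1
  /-- The reflection in a root maps roots to roots. -/
  reflection_mem : ∀ α ∈ Φ, ∀ β ∈ Φ, β - (2 * ⟪α, β⟫ / ⟪α, α⟫) • α ∈ Φ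
  /-- The root system is crystallographic: `⟪α^∨, β⟫ ∈ ℤ`. -/
  crystallographic : ∀ α ∈ Φ, ∀ β ∈ Φ, ∃ n : ℤ, 2 * ⟪α, β⟫ / ⟪α, α⟫ = (n : ℝ)
  /-- The root system is irreducible. -/
  irreducible : ∀ S : Finset E, S ⊆ Φ →
    (∀ α ∈ S, ∀ β ∈ Φ, β ∉ S → ⟪α, β⟫ = 0) → S = ∅ ∨ S = Φ
  /-- The fixed system of positive roots. -/
  pos : Finset E
  pos_subset : pos ⊆ Φ
  /-- The positive roots are cut out by a linear functional not vanishing on any root. -/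
  exists_functional : ∃ f : E →ₗ[ℝ] ℝ,
    (∀ α ∈ Φ, f α ≠ 0) ∧ ∀ α ∈ Φ, (α ∈ pos ↔ 0 < f α)
  /-- The highest root. -/
  θ : E
  θ_mem_pos : θ ∈ pos
  /-- `θ` is the highest root: no positive root can be added to it. -/
  θ_highest : ∀ α ∈ pos, θ + α ∉ Φ
  /-- Normalization of the inner product: `⟪θ, θ⟫ = 2`. -/
  θ_norm : ⟪θ, θ⟫ = 2

/-- The half-sum of the positive roots. -/
def RootSystemData.ρ (S : RootSystemData E) : E := (2⁻¹ : ℝ) • ∑ α ∈ S.pos, α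

/-- The dual Coxeter number `h^∨ = 1 + ⟪ρ, θ⟫`. -/
def RootSystemData.hdual (S : RootSystemData E) : ℝ := 1 + ⟪S.ρ, S.θ⟫

/-- The Weyl group: the subgroup of `GL(E)` generated by the reflections in the roots. -/
def RootSystemData.W (S : RootSystemData E) : Subgroup (E ≃ₗ[ℝ] E) :=
  Subgroup.closure {w | ∃ α ∈ S.Φ, ∀ x : E, w x = x - (2 * ⟪α, x⟫ / ⟪α, α⟫) • α}

/-- The coweight lattice `Γ = {λ ∈ E : ⟪α, λ⟫ ∈ ℤ for all α ∈ Φ}` (identified with a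
lattice in `E` via the inner product). -/
def RootSystemData.coweights (S : RootSystemData E) : Set E :=
  {l | ∀ α ∈ S.Φ, ∃ n : ℤ, ⟪α, l⟫ = (n : ℝ)}

set_option linter.unusedSectionVars false
set_option linter.unusedVariables false
set_option maxHeartbeats 1000000

namespace RootSystemData

variable (S : RootSystemData E)

/-- The positivity functional. -/
def fl : E →ₗ[ℝ] ℝ := S.exists_functional.choose

lemma fl_ne_zero {α : E} (h : α ∈ S.Φ) : S.fl α ≠ 0 :=
  S.exists_functional.choose_spec.1 α h

lemma pos_iff {α : E} (h : α ∈ S.Φ) : α ∈ S.pos ↔ 0 < S.fl α :=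
  S.exists_functional.choose_spec.2 α h

lemma fl_pos {α : E} (h : α ∈ S.pos) : 0 < S.fl α :=
  (S.pos_iff (S.pos_subset h)).1 h

lemma root_ne_zero {α : E} (h : α ∈ S.Φ) : α ≠ 0 := by
  rintro rfl; exact S.zero_not_mem h

lemma inner_self_pos' {α : E} (h : α ∈ S.Φ) : 0 < ⟪α, α⟫ :=
  lt_of_le_of_ne real_inner_self_nonneg
    (fun h' => S.root_ne_zero h ((inner_self_eq_zero (𝕜 := ℝ)).1 h'.symm))

lemma neg_mem_pos {α : E} (h : α ∈ S.Φ) (h2 : α ∉ S.pos) : -α ∈ S.pos := by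
  have hne := S.fl_ne_zero h
  have : ¬ (0 < S.fl α) := fun hp => h2 ((S.pos_iff h).2 hp)
  have hneg : 0 < S.fl (-α) := by
    rw [map_neg]; cases' lt_or_gt_of_ne hne with h1 h1
    · linarith
    · exact absurd h1 this
  exact (S.pos_iff (S.neg_mem α h)).2 hneg

lemma neg_not_pos {α : E} (h : α ∈ S.pos) : -α ∉ S.pos := by
  intro h2
  have h3 := S.fl_pos h
  have h4 := S.fl_pos h2
  rw [map_neg] at h4; linarith

lemma mem_pos_or_neg {α : E} (h : α ∈ S.Φ) : α ∈ S.pos ∨ -α ∈ S.pos := by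
  by_cases hp : α ∈ S.pos
  · exact Or.inl hp
  · exact Or.inr (S.neg_mem_pos h hp)

lemma fl_neg_of_not_pos {α : E} (h : α ∈ S.Φ) (h2 : α ∉ S.pos) : S.fl α < 0 := by
  have := S.fl_pos (S.neg_mem_pos h h2)
  rw [map_neg] at this; linarith

end RootSystemData

/-- The reflection in `α`, as a linear map. -/
def rf (α : E) : E →ₗ[ℝ] E where
  toFun x := x - (2 * ⟪α, x⟫ / ⟪α, α⟫) • α
  map_add' x y := by
    simp only [inner_add_right]
    rw [show 2 * (⟪α, x⟫ + ⟪α, y⟫) / ⟪α, α⟫ = 2 * ⟪α, x⟫ / ⟪α, α⟫ + 2 * ⟪α, y⟫ / ⟪α, α⟫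
      from by ring, add_smul]
    abel
  map_smul' c x := by
    simp only [inner_smul_right, RingHom.id_apply, smul_sub, smul_smul]
    congr 2
    ring

@[simp] lemma rf_apply (α x : E) : rf α x = x - (2 * ⟪α, x⟫ / ⟪α, α⟫) • α := rfl

lemma rf_rf (α x : E) : rf α (rf α x) = x := by
  by_cases hα : α = 0
  · simp [hα]
  · have h0 : ⟪α, α⟫ ≠ 0 := fun h => hα ((inner_self_eq_zero (𝕜 := ℝ)).1 h)
    simp only [rf_apply, inner_sub_right, inner_smul_right]
    rw [show ⟪α, x⟫ - 2 * ⟪α, x⟫ / ⟪α, α⟫ * ⟪α, α⟫ = -⟪α, x⟫ from by field_simp; ring]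
    rw [show 2 * (-⟪α, x⟫) / ⟪α, α⟫ = -(2 * ⟪α, x⟫ / ⟪α, α⟫) from by ring]
    rw [neg_smul]
    abel

/-- The reflection in `α`, as a linear equivalence. -/
def rE (α : E) : E ≃ₗ[ℝ] E :=
  LinearEquiv.ofLinear (rf α) (rf α)
    (by ext x; exact rf_rf α x) (by ext x; exact rf_rf α x)

@[simp] lemma rE_apply (α x : E) : rE α x = x - (2 * ⟪α, x⟫ / ⟪α, α⟫) • α := rfl

lemma rE_inner (α : E) (x y : E) : ⟪rE α x, rE α y⟫ = ⟪x, y⟫ := by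
  by_cases hα : α = 0
  · simp [hα]
  · have h0 : ⟪α, α⟫ ≠ 0 := fun h => hα ((inner_self_eq_zero (𝕜 := ℝ)).1 h)
    simp only [rE_apply, inner_sub_right, inner_sub_left, real_inner_smul_left,
      real_inner_smul_right]
    rw [real_inner_comm y α]
    field_simp
    rw [real_inner_comm α x]
    ring

lemma rE_neg (α : E) : rE (-α) = rE α := by
  apply LinearEquiv.ext; intro x
  simp only [rE_apply, inner_neg_left, inner_neg_right, neg_neg, smul_neg]
  rw [show 2 * -⟪α, x⟫ / ⟪α, α⟫ = -(2 * ⟪α, x⟫ / ⟪α, α⟫) from by ring]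
  simp

lemma rE_mul_self (α : E) : rE α * rE α = 1 :=
  LinearEquiv.ext (fun x => rf_rf α x)

lemma rE_inv (α : E) : (rE α)⁻¹ = rE α :=
  eq_inv_of_mul_eq_one_left (rE_mul_self α)

namespace RootSystemData

variable (S : RootSystemData E)

lemma rE_root {α β : E} (hα : α ∈ S.Φ) (hβ : β ∈ S.Φ) : rE α β ∈ S.Φ := by
  rw [rE_apply]; exact S.reflection_mem α hα β hβ

lemma rE_self {α : E} (hα : α ∈ S.Φ) : rE α α = -α := by
  have h0 : ⟪α, α⟫ ≠ 0 := ne_of_gt (S.inner_self_pos' hα)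
  rw [rE_apply]
  rw [show 2 * ⟪α, α⟫ / ⟪α, α⟫ = 2 from by field_simp]
  rw [two_smul]; abel

lemma rE_mem_W {α : E} (hα : α ∈ S.Φ) : rE α ∈ S.W :=
  Subgroup.subset_closure ⟨α, hα, fun x => rfl⟩

end RootSystemData
namespace RootSystemData

variable (S : RootSystemData E)

lemma mul_apply' (u v : E ≃ₗ[ℝ] E) (x : E) : (u * v) x = u (v x) := rfl

lemma one_apply' (x : E) : (1 : E ≃ₗ[ℝ] E) x = x := rfl

/-- Elements of the Weyl group preserve the inner product and map roots to roots. -/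
lemma W_props : ∀ w ∈ S.W, (∀ x y : E, ⟪w x, w y⟫ = ⟪x, y⟫) ∧ (∀ α ∈ S.Φ, w α ∈ S.Φ) := by
  intro w hw
  induction hw using Subgroup.closure_induction with
  | mem g hg =>
    obtain ⟨α, hα, hgα⟩ := hg
    have hge : g = rE α := LinearEquiv.ext fun x => by rw [hgα x]; rfl
    subst hge
    exact ⟨rE_inner α, fun β hβ => S.rE_root hα hβ⟩
  | one => exact ⟨fun x y => rfl, fun α hα => hα⟩
  | mul u v hu hv ihu ihv =>
    refine ⟨fun x y => ?_, fun α hα => ?_⟩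
    · rw [mul_apply', mul_apply', ihu.1, ihv.1]
    · rw [mul_apply']; exact ihu.2 _ (ihv.2 α hα)
  | inv u hu ihu =>
    constructor
    · intro x y
      have h := ihu.1 (u⁻¹ x) (u⁻¹ y)
      have e1 : u (u⁻¹ x) = x := u.apply_symm_apply x
      have e2 : u (u⁻¹ y) = y := u.apply_symm_apply y
      rw [e1, e2] at h
      exact h.symm
    · intro α hα
      classical
      -- surjectivity of u on Φ
      have hinj : Set.InjOn u S.Φ := fun a _ b _ h => u.injective h
      have himg : S.Φ.image u ⊆ S.Φ := by
        intro b hb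
        obtain ⟨a, ha, rfl⟩ := Finset.mem_image.1 hb
        exact ihu.2 a ha
      have hcard : (S.Φ.image u).card = S.Φ.card := Finset.card_image_of_injOn hinj
      have heq : S.Φ.image u = S.Φ := Finset.eq_of_subset_of_card_le himg (le_of_eq hcard.symm)
      have : α ∈ S.Φ.image u := heq.symm ▸ hα
      obtain ⟨a, ha, hau⟩ := Finset.mem_image.1 this
      have : u⁻¹ α = a := by rw [← hau]; exact u.symm_apply_apply a
      rw [this]; exact ha

lemma W_inner {w : E ≃ₗ[ℝ] E} (hw : w ∈ S.W) (x y : E) : ⟪w x, w y⟫ = ⟪x, y⟫ :=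
  (S.W_props w hw).1 x y

lemma W_root {w : E ≃ₗ[ℝ] E} (hw : w ∈ S.W) {α : E} (hα : α ∈ S.Φ) : w α ∈ S.Φ :=
  (S.W_props w hw).2 α hα

/-- Conjugation of reflections: `s_{uβ} = u s_β u⁻¹` for `u` in the Weyl group. -/
lemma rE_conj {u : E ≃ₗ[ℝ] E} (hu : u ∈ S.W) (β : E) (hβ : β ∈ S.Φ) :
    rE (u β) = u * rE β * u⁻¹ := by
  apply LinearEquiv.ext; intro x
  have e : u (u⁻¹ x) = x := u.apply_symm_apply x
  rw [mul_apply', mul_apply', rE_apply, rE_apply, map_sub, map_smul, e]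
  congr 3
  · have h1 : ⟪u β, x⟫ = ⟪β, u⁻¹ x⟫ := by
      conv_lhs => rw [show x = u (u⁻¹ x) from (u.apply_symm_apply x).symm]
      exact S.W_inner hu β (u⁻¹ x)
    rw [h1]
  · exact S.W_inner hu β β

end RootSystemData
namespace RootSystemData

variable (S : RootSystemData E)

/-- The crystallographic integer `⟨β, α^∨⟩`. -/
lemma cartan_int {α β : E} (hα : α ∈ S.Φ) (hβ : β ∈ S.Φ) :
    ∃ n : ℤ, 2 * ⟪α, β⟫ / ⟪α, α⟫ = (n : ℝ) :=
  S.crystallographic α hα β hβ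

/-- Key lemma: if `α, β` are roots with `⟪α, β⟫ > 0` and `α ≠ β`, then `α - β` is a root. -/
lemma root_sub_root {α β : E} (hα : α ∈ S.Φ) (hβ : β ∈ S.Φ) (hip : 0 < ⟪α, β⟫)
    (hne : α ≠ β) : α - β ∈ S.Φ := by
  have ha : 0 < ⟪α, α⟫ := S.inner_self_pos' hα
  have hb : 0 < ⟪β, β⟫ := S.inner_self_pos' hβ
  obtain ⟨n, hn⟩ := S.cartan_int hα hβ
  obtain ⟨m, hm⟩ := S.cartan_int hβ hα
  have hnpos : (0 : ℝ) < n := by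
    rw [← hn]; positivity
  have hmpos : (0 : ℝ) < m := by
    rw [← hm, real_inner_comm α β] at *
    positivity
  have hn1 : 1 ≤ n := by exact_mod_cast hnpos
  have hm1 : 1 ≤ m := by exact_mod_cast hmpos
  -- not proportional
  have hprop : ¬ ∃ c : ℝ, β = c • α := by
    rintro ⟨c, rfl⟩
    rcases S.reduced α hα c hβ with h1 | h1
    · rw [h1, one_smul] at hne; exact hne rfl
    · rw [h1, neg_smul, one_smul] at hip
      rw [inner_neg_right] at hip
      linarith
  -- strict Cauchy-Schwarz
  have hcs : ⟪α, β⟫ * ⟪α, β⟫ < ⟪α, α⟫ * ⟪β, β⟫ := by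
    rcases lt_or_eq_of_le (real_inner_mul_inner_self_le α β) with h | h
    · exact h
    · exfalso
      have hA : (0:ℝ) < ‖α‖ := norm_pos_iff.2 (S.root_ne_zero hα)
      have hB : (0:ℝ) < ‖β‖ := norm_pos_iff.2 (S.root_ne_zero hβ)
      have hnorm : ⟪α, β⟫ = ‖α‖ * ‖β‖ := by
        have h1 : ⟪α, α⟫ = ‖α‖ * ‖α‖ := real_inner_self_eq_norm_mul_norm α
        have h2 : ⟪β, β⟫ = ‖β‖ * ‖β‖ := real_inner_self_eq_norm_mul_norm β
        have hsq : ⟪α, β⟫ * ⟪α, β⟫ = (‖α‖ * ‖β‖) * (‖α‖ * ‖β‖) := by rw [h]; rw [h1, h2]; ring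
        nlinarith [mul_pos hA hB]
      have hkey := inner_eq_norm_mul_iff_real.1 hnorm
      apply hprop
      refine ⟨‖β‖ / ‖α‖, ?_⟩
      have : (‖α‖)⁻¹ • (‖β‖ • α) = (‖α‖)⁻¹ • (‖α‖ • β) := by rw [hkey]
      rw [smul_smul, smul_smul, inv_mul_cancel₀ (ne_of_gt hA), one_smul] at this
      rw [div_eq_inv_mul]
      exact this.symm
  -- n * m ≤ 3
  have hnm : (n : ℝ) * m < 4 := by
    have : (n : ℝ) * m = 4 * (⟪α, β⟫ * ⟪α, β⟫) / (⟪α, α⟫ * ⟪β, β⟫) := by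
      rw [← hn, ← hm, real_inner_comm β α]
      field_simp
      ring
    rw [this]
    rw [div_lt_iff₀ (by positivity)]
    nlinarith
  have : n = 1 ∨ m = 1 := by
    by_contra hcon
    push_neg at hcon
    have h2n : 2 ≤ n := by omega
    have h2m : 2 ≤ m := by omega
    have : (4 : ℝ) ≤ (n : ℝ) * m := by
      have : (4 : ℤ) ≤ n * m := by nlinarith
      exact_mod_cast this
    linarith
  rcases this with h1 | h1
  · -- 2⟪α,β⟫/⟪α,α⟫ = 1, so s_α β = β - α ∈ Φ, hence α - β ∈ Φ
    have := S.reflection_mem α hα β hβ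
    rw [hn, h1] at this
    simp only [Int.cast_one, one_smul] at this
    have h2 := S.neg_mem _ this
    rw [neg_sub] at h2
    exact h2
  · -- s_β α = α - β ∈ Φ
    have := S.reflection_mem β hβ α hα
    rw [hm, h1] at this
    simp only [Int.cast_one, one_smul] at this
    exact this

/-- If `⟪α, β⟫ < 0` and `α ≠ -β` then `α + β` is a root. -/
lemma root_add_root {α β : E} (hα : α ∈ S.Φ) (hβ : β ∈ S.Φ) (hip : ⟪α, β⟫ < 0)
    (hne : α ≠ -β) : α + β ∈ S.Φ := by
  have h := S.root_sub_root hα (S.neg_mem β hβ) (by rw [inner_neg_right]; linarith) hne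
  rw [sub_neg_eq_add] at h
  exact h

end RootSystemData
namespace RootSystemData

variable (S : RootSystemData E)

/-- The simple (indecomposable) positive roots. -/
def Δ : Finset E :=
  @Finset.filter E (fun β => ¬ ∃ γ ∈ S.pos, ∃ δ ∈ S.pos, β = γ + δ)
    (fun _ => Classical.propDecidable _) S.pos

lemma mem_Δ_iff {β : E} :
    β ∈ S.Δ ↔ β ∈ S.pos ∧ ¬ ∃ γ ∈ S.pos, ∃ δ ∈ S.pos, β = γ + δ :=
  @Finset.mem_filter E (fun β => ¬ ∃ γ ∈ S.pos, ∃ δ ∈ S.pos, β = γ + δ)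
    (fun _ => Classical.propDecidable _) S.pos β

lemma Δ_subset : S.Δ ⊆ S.pos := fun _ hx => ((S.mem_Δ_iff).1 hx).1

lemma Δ_mem_Φ {α : E} (h : α ∈ S.Δ) : α ∈ S.Φ := S.pos_subset (S.Δ_subset h)

/-- Strong induction over positive roots by the value of the positivity functional. -/
lemma pos_induction (P : E → Prop)
    (h : ∀ β ∈ S.pos, (∀ γ ∈ S.pos, S.fl γ < S.fl β → P γ) → P β) :
    ∀ β ∈ S.pos, P β := by
  classical
  suffices H : ∀ n : ℕ, ∀ β ∈ S.pos,
      (S.pos.filter fun γ => S.fl γ < S.fl β).card ≤ n → P β by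
    intro β hβ
    exact H _ β hβ le_rfl
  intro n
  induction n with
  | zero =>
    intro β hβ hc
    apply h β hβ
    intro γ hγ hlt
    exfalso
    have : γ ∈ S.pos.filter fun γ => S.fl γ < S.fl β := Finset.mem_filter.2 ⟨hγ, hlt⟩
    have := Finset.card_pos.2 ⟨γ, this⟩
    omega
  | succ n ih =>
    intro β hβ hc
    apply h β hβ
    intro γ hγ hlt
    apply ih γ hγ
    have hsub : (S.pos.filter fun x => S.fl x < S.fl γ) ⊂
        (S.pos.filter fun x => S.fl x < S.fl β) := by
      constructor
      · intro x hx
        rcases Finset.mem_filter.1 hx with ⟨h1, h2⟩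
        exact Finset.mem_filter.2 ⟨h1, lt_trans h2 hlt⟩
      · intro hcon
        have hγmem : γ ∈ S.pos.filter fun x => S.fl x < S.fl β :=
          Finset.mem_filter.2 ⟨hγ, hlt⟩
        have := Finset.mem_filter.1 (hcon hγmem)
        exact lt_irrefl _ this.2
    have := Finset.card_lt_card hsub
    omega

/-- Every positive root is an `ℕ`-linear combination of simple roots. -/
lemma pos_decomp : ∀ β ∈ S.pos, ∃ c : E → ℕ, β = ∑ γ ∈ S.Δ, (c γ : ℝ) • γ := by
  classical
  apply S.pos_induction
  intro β hβ ih
  by_cases hD : β ∈ S.Δ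
  · refine ⟨fun x => if x = β then 1 else 0, ?_⟩
    rw [Finset.sum_eq_single β]
    · simp
    · intro b hb hne
      simp [hne]
    · intro hnb
      exact absurd hD hnb
  · have : ∃ γ ∈ S.pos, ∃ δ ∈ S.pos, β = γ + δ := by
      by_contra hcon
      exact hD ((S.mem_Δ_iff).2 ⟨hβ, hcon⟩)
    obtain ⟨γ, hγ, δ, hδ, rfl⟩ := this
    have hfγ := S.fl_pos hγ
    have hfδ := S.fl_pos hδ
    have h1 : S.fl γ < S.fl (γ + δ) := by rw [map_add]; linarith
    have h2 : S.fl δ < S.fl (γ + δ) := by rw [map_add]; linarith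
    obtain ⟨c1, hc1⟩ := ih γ hγ h1
    obtain ⟨c2, hc2⟩ := ih δ hδ h2
    refine ⟨fun x => c1 x + c2 x, ?_⟩
    rw [hc1, hc2, ← Finset.sum_add_distrib]
    apply Finset.sum_congr rfl
    intro x hx
    push_cast
    rw [add_smul]

/-- Distinct simple roots form obtuse angles. -/
lemma Δ_obtuse {α β : E} (hα : α ∈ S.Δ) (hβ : β ∈ S.Δ) (hne : α ≠ β) : ⟪α, β⟫ ≤ 0 := by
  by_contra hcon
  push_neg at hcon
  have hsub := S.root_sub_root (S.Δ_mem_Φ hα) (S.Δ_mem_Φ hβ) hcon hne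
  rcases S.mem_pos_or_neg hsub with h | h
  · -- α = (α - β) + β is decomposable
    have := ((S.mem_Δ_iff).1 hα).2
    exact this ⟨α - β, h, β, S.Δ_subset hβ, by abel⟩
  · rw [neg_sub] at h
    have := ((S.mem_Δ_iff).1 hβ).2
    exact this ⟨β - α, h, α, S.Δ_subset hα, by abel⟩

/-- The simple roots are linearly independent. -/
lemma Δ_indep (c : E → ℝ) (h : ∑ γ ∈ S.Δ, c γ • γ = 0) : ∀ γ ∈ S.Δ, c γ = 0 := by
  classical
  set cp : E → ℝ := fun γ => max (c γ) 0 with hcp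
  set cn : E → ℝ := fun γ => max (-(c γ)) 0 with hcn
  have hcpn : ∀ γ, c γ = cp γ - cn γ := by
    intro γ; simp only [hcp, hcn]
    rcases le_or_gt (c γ) 0 with h1 | h1
    · rw [max_eq_right h1, max_eq_left (by linarith)]; ring
    · rw [max_eq_left (le_of_lt h1), max_eq_right (by linarith)]; ring
  have hcp0 : ∀ γ, 0 ≤ cp γ := fun γ => le_max_right _ _
  have hcn0 : ∀ γ, 0 ≤ cn γ := fun γ => le_max_right _ _
  have hcpcn : ∀ γ, cp γ * cn γ = 0 := by
    intro γ; simp only [hcp, hcn]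
    rcases le_or_gt (c γ) 0 with h1 | h1
    · rw [max_eq_right h1]; ring
    · rw [max_eq_right (by linarith : -(c γ) ≤ 0)]; ring
  set v : E := ∑ γ ∈ S.Δ, cp γ • γ with hv
  have hveq : v = ∑ γ ∈ S.Δ, cn γ • γ := by
    have : ∑ γ ∈ S.Δ, cp γ • γ - ∑ γ ∈ S.Δ, cn γ • γ = 0 := by
      rw [← Finset.sum_sub_distrib]
      rw [← h]
      apply Finset.sum_congr rfl
      intro x hx
      rw [← sub_smul, ← hcpn]
    rw [hv]
    rw [sub_eq_zero] at this
    exact this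
  have hv0 : v = 0 := by
    have hip : ⟪v, v⟫ ≤ 0 := by
      nth_rewrite 1 [hv]
      rw [hveq]
      rw [sum_inner]
      apply Finset.sum_nonpos
      intro γ hγ
      rw [real_inner_smul_left, inner_sum]
      rw [Finset.mul_sum]
      apply Finset.sum_nonpos
      intro δ hδ
      rw [real_inner_smul_right]
      by_cases hgd : γ = δ
      · subst hgd
        rw [show cp γ * (cn γ * ⟪γ, γ⟫) = (cp γ * cn γ) * ⟪γ, γ⟫ from by ring, hcpcn]
        simp
      · have := S.Δ_obtuse hγ hδ hgd
        have h1 : 0 ≤ cp γ * cn δ := mul_nonneg (hcp0 γ) (hcn0 δ)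
        nlinarith
    have := real_inner_self_nonneg (x := v)
    exact (inner_self_eq_zero (𝕜 := ℝ)).1 (le_antisymm hip this)
  have hflcp : ∀ γ ∈ S.Δ, cp γ = 0 := by
    have h0 : S.fl v = 0 := by rw [hv0, map_zero]
    rw [hv, map_sum] at h0
    simp only [map_smul, smul_eq_mul] at h0
    have := (Finset.sum_eq_zero_iff_of_nonneg ?_).1 h0
    · intro γ hγ
      have hfl := S.fl_pos (S.Δ_subset hγ)
      have := this γ hγ
      rcases mul_eq_zero.1 this with h1 | h1
      · exact h1
      · linarith
    · intro γ hγ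
      exact mul_nonneg (hcp0 γ) (le_of_lt (S.fl_pos (S.Δ_subset hγ)))
  have hflcn : ∀ γ ∈ S.Δ, cn γ = 0 := by
    have h0 : S.fl v = 0 := by rw [hv0, map_zero]
    rw [hveq, map_sum] at h0
    simp only [map_smul, smul_eq_mul] at h0
    have := (Finset.sum_eq_zero_iff_of_nonneg ?_).1 h0
    · intro γ hγ
      have hfl := S.fl_pos (S.Δ_subset hγ)
      have := this γ hγ
      rcases mul_eq_zero.1 this with h1 | h1
      · exact h1
      · linarith
    · intro γ hγ
      exact mul_nonneg (hcn0 γ) (le_of_lt (S.fl_pos (S.Δ_subset hγ)))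
  intro γ hγ
  rw [hcpn γ, hflcp γ hγ, hflcn γ hγ, sub_zero]

/-- Uniqueness of coordinates w.r.t. the simple roots. -/
lemma Δ_coords_unique (c d : E → ℝ) (h : ∑ γ ∈ S.Δ, c γ • γ = ∑ γ ∈ S.Δ, d γ • γ) :
    ∀ γ ∈ S.Δ, c γ = d γ := by
  have : ∑ γ ∈ S.Δ, (c γ - d γ) • γ = 0 := by
    rw [← sub_eq_zero] at h
    rw [← h, ← Finset.sum_sub_distrib]
    apply Finset.sum_congr rfl
    intro x hx
    rw [sub_smul]
  intro γ hγ
  have := S.Δ_indep _ this γ hγ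
  linarith

end RootSystemData
lemma rE_rE (α x : E) : rE α (rE α x) = x := rf_rf α x

namespace RootSystemData

variable (S : RootSystemData E)

lemma neg_sum_smul (d : E → ℝ) :
    -(∑ γ ∈ S.Δ, d γ • γ) = ∑ γ ∈ S.Δ, (-(d γ)) • γ := by
  rw [← Finset.sum_neg_distrib]
  apply Finset.sum_congr rfl
  intro γ _
  rw [neg_smul]

/-- A vector with coordinates of mixed signs w.r.t. the simple roots is not a root. -/
lemma not_root_mixed (c : E → ℝ) {γ1 γ2 : E} (h1 : γ1 ∈ S.Δ) (h2 : γ2 ∈ S.Δ)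
    (hp : 0 < c γ1) (hn : c γ2 < 0) : (∑ γ ∈ S.Δ, c γ • γ) ∉ S.Φ := by
  intro hmem
  set x := ∑ γ ∈ S.Δ, c γ • γ with hx
  rcases S.mem_pos_or_neg hmem with h | h
  · obtain ⟨d, hd⟩ := S.pos_decomp x h
    have h5 := S.Δ_coords_unique c (fun γ => (d γ : ℝ)) (by rw [← hd]) γ2 h2
    have h6 : c γ2 = (d γ2 : ℝ) := h5
    have hd2 : (0:ℝ) ≤ (d γ2 : ℝ) := Nat.cast_nonneg _
    linarith
  · obtain ⟨d, hd⟩ := S.pos_decomp (-x) h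
    have hxeq : x = ∑ γ ∈ S.Δ, (-(d γ : ℝ)) • γ := by
      rw [← S.neg_sum_smul, ← hd, neg_neg]
    have h5 := S.Δ_coords_unique c (fun γ => -(d γ : ℝ)) (by rw [← hxeq]) γ1 h1
    have h6 : c γ1 = -(d γ1 : ℝ) := h5
    have hd1 : (0:ℝ) ≤ (d γ1 : ℝ) := Nat.cast_nonneg _
    linarith

/-- A simple reflection permutes the positive roots other than the simple root itself. -/
lemma rE_simple_pos {α β : E} (hα : α ∈ S.Δ) (hβ : β ∈ S.pos) (hne : β ≠ α) :
    rE α β ∈ S.pos := by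
  classical
  have hαΦ := S.Δ_mem_Φ hα
  have hβΦ := S.pos_subset hβ
  obtain ⟨c, hc⟩ := S.pos_decomp β hβ
  -- there is a simple root γ ≠ α with c γ ≠ 0
  have hexists : ∃ γ ∈ S.Δ, γ ≠ α ∧ c γ ≠ 0 := by
    by_contra hcon
    push_neg at hcon
    have hβα : β = (c α : ℝ) • α := by
      rw [hc]
      rw [Finset.sum_eq_single α]
      · intro b hb hbne
        rw [hcon b hb hbne]
        simp
      · intro hnα
        exact absurd hα hnα
    have := S.reduced α hαΦ (c α : ℝ) (by rw [← hβα]; exact hβΦ)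
    rcases this with h1 | h1
    · rw [h1, one_smul] at hβα; exact hne hβα
    · have h2 : (0:ℝ) ≤ (c α : ℝ) := Nat.cast_nonneg _
      rw [h1] at h2; linarith
  obtain ⟨γ0, hγ0, hγ0ne, hcγ0⟩ := hexists
  have hcγ0' : (0:ℝ) < (c γ0 : ℝ) := by
    have := Nat.pos_of_ne_zero hcγ0
    exact_mod_cast this
  have hmem : rE α β ∈ S.Φ := S.rE_root hαΦ hβΦ
  -- coordinates of rE α β
  set n : ℝ := 2 * ⟪α, β⟫ / ⟪α, α⟫ with hn
  set d : E → ℝ := fun x => if x = α then (c α : ℝ) - n else (c x : ℝ) with hd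
  have e1 : d α = (c α : ℝ) - n := by rw [hd]; simp
  have e2 : ∀ x ∈ S.Δ.erase α, d x • x = (c x : ℝ) • x := by
    intro x hx
    have : x ≠ α := Finset.ne_of_mem_erase hx
    rw [hd]; simp [this]
  have hR : ∑ γ ∈ S.Δ, d γ • γ = β - n • α := by
    have e3 : ∑ γ ∈ S.Δ, d γ • γ = d α • α + ∑ x ∈ S.Δ.erase α, d x • x :=
      (Finset.add_sum_erase _ _ hα).symm
    have e4 : (β : E) = (c α : ℝ) • α + ∑ x ∈ S.Δ.erase α, (c x : ℝ) • x := by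
      rw [hc]
      exact (Finset.add_sum_erase _ _ hα).symm
    rw [e3, Finset.sum_congr rfl e2, e1, e4, sub_smul]
    abel
  have hsum : rE α β = ∑ γ ∈ S.Δ, d γ • γ := by
    rw [rE_apply, hR, hn]
  -- rE α β is a positive root
  by_contra hcon
  have hneg : -(rE α β) ∈ S.pos := S.neg_mem_pos hmem hcon
  obtain ⟨e, he⟩ := S.pos_decomp _ hneg
  have hxeq : rE α β = ∑ γ ∈ S.Δ, (-(e γ : ℝ)) • γ := by
    rw [← S.neg_sum_smul, ← he, neg_neg]
  have huniq := S.Δ_coords_unique d (fun γ => -(e γ : ℝ)) (by rw [← hsum, ← hxeq]) γ0 hγ0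
  have huniq' : d γ0 = -(e γ0 : ℝ) := huniq
  have hdγ0 : d γ0 = (c γ0 : ℝ) := by rw [hd]; simp [hγ0ne]
  have hee : (0:ℝ) ≤ (e γ0 : ℝ) := Nat.cast_nonneg _
  rw [hdγ0] at huniq'
  linarith

lemma rE_rho {α : E} (hα : α ∈ S.Δ) : rE α S.ρ = S.ρ - α := by
  classical
  have hαΦ := S.Δ_mem_Φ hα
  have hαpos := S.Δ_subset hα
  set T := S.pos.erase α with hT
  have himg : T.image (rE α) = T := by
    apply Finset.eq_of_subset_of_card_le
    · intro x hx
      obtain ⟨γ, hγ, rfl⟩ := Finset.mem_image.1 hx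
      have hγpos : γ ∈ S.pos := Finset.mem_of_mem_erase hγ
      have hγne : γ ≠ α := Finset.ne_of_mem_erase hγ
      have h1 : rE α γ ∈ S.pos := S.rE_simple_pos hα hγpos hγne
      apply Finset.mem_erase.2
      refine ⟨?_, h1⟩
      intro heq
      have h2 := congrArg (⇑(rE α)) heq
      rw [rE_rE, S.rE_self hαΦ] at h2
      subst h2
      exact S.neg_not_pos hγpos (by simpa using hαpos)
    · rw [Finset.card_image_of_injOn (fun a _ b _ h => (rE α).injective h)]
  have hsum2 : rE α (∑ γ ∈ S.pos, γ) = (∑ γ ∈ S.pos, γ) - (2:ℝ) • α := by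
    rw [map_sum]
    rw [← Finset.add_sum_erase _ _ hαpos]
    rw [S.rE_self hαΦ]
    have h3 : ∑ γ ∈ S.pos.erase α, rE α γ = ∑ γ ∈ T, γ := by
      rw [← himg, Finset.sum_image (fun a _ b _ h => (rE α).injective h)]
    rw [h3, hT]
    conv_rhs => rw [← Finset.add_sum_erase _ _ hαpos]
    rw [show ((2:ℝ)) • α = α + α from two_smul ℝ α]
    abel
  have h4 : rE α S.ρ = (2⁻¹ : ℝ) • ((∑ γ ∈ S.pos, γ) - (2:ℝ) • α) := by
    rw [ρ, map_smul, hsum2]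
  rw [h4, smul_sub, ρ]
  congr 1
  rw [smul_smul]
  norm_num

lemma rho_inner_simple {α : E} (hα : α ∈ S.Δ) : 2 * ⟪α, S.ρ⟫ / ⟪α, α⟫ = 1 := by
  have h := S.rE_rho hα
  rw [rE_apply] at h
  have h2 : (2 * ⟪α, S.ρ⟫ / ⟪α, α⟫) • α - α
      = (S.ρ - α) - (S.ρ - (2 * ⟪α, S.ρ⟫ / ⟪α, α⟫) • α) := by abel
  rw [← h, sub_self] at h2
  have h3 : (2 * ⟪α, S.ρ⟫ / ⟪α, α⟫ - 1) • α = 0 := by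
    rw [sub_smul, one_smul]; exact h2
  rcases smul_eq_zero.1 h3 with h4 | h4
  · linarith [h4]
  · exact absurd h4 (S.root_ne_zero (S.Δ_mem_Φ hα))

lemma rho_inner_simple_pos {α : E} (hα : α ∈ S.Δ) : 0 < ⟪S.ρ, α⟫ := by
  have h := S.rho_inner_simple hα
  have ha := S.inner_self_pos' (S.Δ_mem_Φ hα)
  have h2 : 2 * ⟪α, S.ρ⟫ = ⟪α, α⟫ := by
    field_simp at h
    linarith
  rw [real_inner_comm]
  linarith

/-- `ρ` is regular: it has positive inner product with every positive root. -/
lemma rho_pos_inner {β : E} (hβ : β ∈ S.pos) : 0 < ⟪S.ρ, β⟫ := by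
  obtain ⟨c, hc⟩ := S.pos_decomp β hβ
  have hex : ∃ γ ∈ S.Δ, c γ ≠ 0 := by
    by_contra hcon
    push_neg at hcon
    have : β = 0 := by
      rw [hc]
      apply Finset.sum_eq_zero
      intro γ hγ
      rw [hcon γ hγ]; simp
    exact S.root_ne_zero (S.pos_subset hβ) this
  obtain ⟨γ0, hγ0, hc0⟩ := hex
  rw [hc, inner_sum]
  have hterms : ∀ γ ∈ S.Δ, 0 ≤ ⟪S.ρ, (c γ : ℝ) • γ⟫ := by
    intro γ hγ
    rw [real_inner_smul_right]
    exact mul_nonneg (Nat.cast_nonneg _) (le_of_lt (S.rho_inner_simple_pos hγ))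
  apply Finset.sum_pos' hterms
  refine ⟨γ0, hγ0, ?_⟩
  rw [real_inner_smul_right]
  apply mul_pos _ (S.rho_inner_simple_pos hγ0)
  exact_mod_cast Nat.pos_of_ne_zero hc0

end RootSystemData
namespace RootSystemData

variable (S : RootSystemData E)

lemma θ_mem_Φ : S.θ ∈ S.Φ := S.pos_subset S.θ_mem_pos

lemma sum_indicator_eq {α : E} (hα : α ∈ S.Δ) (m : E → ℝ)
    (hm0 : ∀ γ ∈ S.Δ, γ ≠ α → m γ = 0) (hm1 : m α = 1) :
    ∑ γ ∈ S.Δ, m γ • γ = α := by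
  rw [Finset.sum_eq_single α]
  · rw [hm1, one_smul]
  · intro b hb hbne
    rw [hm0 b hb hbne, zero_smul]
  · intro h; exact absurd hα h

lemma θ_dominant {α : E} (hα : α ∈ S.Δ) : 0 ≤ ⟪S.θ, α⟫ := by
  by_contra hcon
  push_neg at hcon
  have hne : S.θ ≠ -α := by
    intro h
    have h1 := S.θ_mem_pos
    rw [h] at h1
    exact S.neg_not_pos (S.Δ_subset hα) h1
  have := S.root_add_root S.θ_mem_Φ (S.Δ_mem_Φ hα) hcon hne
  exact S.θ_highest α (S.Δ_subset hα) this

lemma pos_dominant_inner_pos {β : E} (hβ : β ∈ S.pos)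
    (hdom : ∀ α ∈ S.Δ, 0 ≤ ⟪β, α⟫) : 0 < ⟪S.θ, β⟫ := by
  classical
  obtain ⟨nθ, hnθ⟩ := S.pos_decomp S.θ S.θ_mem_pos
  set A : Finset E := S.Δ.filter (fun γ => nθ γ ≠ 0) with hA
  set B : Finset E := S.Δ.filter (fun γ => nθ γ = 0) with hB
  have hAΔ : A ⊆ S.Δ := Finset.filter_subset _ _
  have hBΔ : B ⊆ S.Δ := Finset.filter_subset _ _
  have hAB_disj : ∀ x, x ∈ A → x ∈ B → False := by
    intro x hxA hxB
    exact (Finset.mem_filter.1 hxA).2 (Finset.mem_filter.1 hxB).2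
  -- orthogonality between A and B
  have hAB : ∀ a ∈ A, ∀ b ∈ B, ⟪a, b⟫ = 0 := by
    intro a haA b hbB
    have hbΔ := hBΔ hbB
    have hdomθ := S.θ_dominant hbΔ
    have hsum : ⟪S.θ, b⟫ = ∑ γ ∈ S.Δ, (nθ γ : ℝ) * ⟪γ, b⟫ := by
      rw [hnθ, sum_inner]
      apply Finset.sum_congr rfl
      intro γ hγ
      rw [real_inner_smul_left]
    have hterms : ∀ γ ∈ S.Δ, (nθ γ : ℝ) * ⟪γ, b⟫ ≤ 0 := by
      intro γ hγ
      by_cases hγb : γ = b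
      · subst hγb
        have : nθ γ = 0 := (Finset.mem_filter.1 hbB).2
        rw [this]; simp
      · have := S.Δ_obtuse hγ hbΔ hγb
        exact mul_nonpos_of_nonneg_of_nonpos (Nat.cast_nonneg _) this
    have hall : ∀ γ ∈ S.Δ, (nθ γ : ℝ) * ⟪γ, b⟫ = 0 := by
      have h0 : ∑ γ ∈ S.Δ, (nθ γ : ℝ) * ⟪γ, b⟫ = 0 := by
        have h1 : (0:ℝ) ≤ ∑ γ ∈ S.Δ, (nθ γ : ℝ) * ⟪γ, b⟫ := by rw [← hsum]; exact hdomθ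
        have h2 : ∑ γ ∈ S.Δ, (nθ γ : ℝ) * ⟪γ, b⟫ ≤ 0 := Finset.sum_nonpos hterms
        linarith
      exact (Finset.sum_eq_zero_iff_of_nonpos hterms).1 h0
    have haΔ := hAΔ haA
    have := hall a haΔ
    have hna : (nθ a : ℝ) ≠ 0 := by
      have := (Finset.mem_filter.1 haA).2
      exact_mod_cast this
    rcases mul_eq_zero.1 this with h | h
    · exact absurd h hna
    · exact h
  -- separation: every positive root is supported on A or on B
  have hsep : ∀ γ ∈ S.pos, ∀ c : E → ℕ, γ = ∑ δ ∈ S.Δ, (c δ : ℝ) • δ →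
      (∀ a ∈ A, c a = 0) ∨ (∀ b ∈ B, c b = 0) := by
    apply S.pos_induction (fun γ => ∀ c : E → ℕ, γ = ∑ δ ∈ S.Δ, (c δ : ℝ) • δ →
      (∀ a ∈ A, c a = 0) ∨ (∀ b ∈ B, c b = 0))
    intro γ hγ ih c hc
    by_contra hcon
    push_neg at hcon
    obtain ⟨⟨a1, ha1A, ha1⟩, ⟨b1, hb1B, hb1⟩⟩ := hcon
    set γA : E := ∑ a ∈ A, (c a : ℝ) • a with hγA
    set γB : E := ∑ b ∈ B, (c b : ℝ) • b with hγB
    have hsplit : γ = γA + γB := by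
      rw [hc, hγA, hγB, hA, hB]
      rw [← Finset.sum_filter_add_sum_filter_not S.Δ (fun γ => nθ γ ≠ 0)]
      congr 1
      apply Finset.sum_congr _ (fun x _ => rfl)
      apply Finset.filter_congr
      intro x hx
      simp [not_not]
    have hγAB0 : ⟪γA, γB⟫ = 0 := by
      rw [hγA, hγB, sum_inner]
      apply Finset.sum_eq_zero
      intro a haA
      rw [real_inner_smul_left, inner_sum]
      rw [Finset.mul_sum]
      apply Finset.sum_eq_zero
      intro b hbB
      rw [real_inner_smul_right, hAB a haA b hbB]
      ring
    have hγA0 : γA ≠ 0 := by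
      intro h0
      have hs : ∑ δ ∈ S.Δ, (if δ ∈ A then (c δ : ℝ) else 0) • δ = γA := by
        rw [hγA]
        have h1 : ∀ δ ∈ S.Δ, (if δ ∈ A then (c δ : ℝ) else 0) • δ
            = if δ ∈ A then (c δ : ℝ) • δ else 0 := by
          intro δ _
          by_cases hδ : δ ∈ A
          · rw [if_pos hδ, if_pos hδ]
          · rw [if_neg hδ, if_neg hδ, zero_smul]
        rw [Finset.sum_congr rfl h1, Finset.sum_ite_mem,
          Finset.inter_eq_right.2 hAΔ]
      have h2 := S.Δ_indep _ (by rw [hs, h0]) a1 (hAΔ ha1A)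
      rw [if_pos ha1A] at h2
      exact ha1 (by exact_mod_cast h2)
    -- find a ∈ A with c a ≥ 1 and ⟪γ, a⟫ > 0
    have hBA0 : ⟪γB, γA⟫ = 0 := by
      rw [real_inner_comm]; exact hγAB0
    have hip : 0 < ⟪γ, γA⟫ := by
      rw [hsplit, inner_add_left, hBA0, add_zero]
      have h1 := real_inner_self_nonneg (x := γA)
      rcases lt_or_eq_of_le h1 with h | h
      · exact h
      · exact absurd ((inner_self_eq_zero (𝕜 := ℝ)).1 h.symm) hγA0
    have hterm : ∃ a ∈ A, 0 < (c a : ℝ) * ⟪γ, a⟫ := by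
      by_contra hcon2
      push_neg at hcon2
      have : ⟪γ, γA⟫ ≤ 0 := by
        rw [hγA, inner_sum]
        apply Finset.sum_nonpos
        intro a haA
        rw [real_inner_smul_right]
        exact hcon2 a haA
      linarith
    obtain ⟨a, haA, hapos⟩ := hterm
    have haΔ := hAΔ haA
    have hind : ∑ δ ∈ S.Δ, (if δ = a then (1:ℝ) else 0) • δ = a :=
      S.sum_indicator_eq haΔ _ (fun γ _ hne => if_neg hne) (if_pos rfl)
    have hca : c a ≠ 0 := by
      intro h0
      rw [h0] at hapos; simp at hapos
    have hγa : 0 < ⟪γ, a⟫ := by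
      have hc0 : (0:ℝ) ≤ (c a : ℝ) := Nat.cast_nonneg _
      nlinarith
    have hγnea : γ ≠ a := by
      intro h0
      have huniq := S.Δ_coords_unique (fun δ => (c δ : ℝ))
        (fun δ => if δ = a then (1:ℝ) else 0)
        (by rw [← hc, hind, h0]) b1 (hBΔ hb1B)
      have hbne : b1 ≠ a := by
        intro h; exact hAB_disj a haA (h ▸ hb1B)
      have : (c b1 : ℝ) = 0 := by
        have h2 : (c b1 : ℝ) = (if b1 = a then (1:ℝ) else 0) := huniq
        rw [if_neg hbne] at h2
        exact h2
      exact hb1 (by exact_mod_cast this)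
    have hsub := S.root_sub_root (S.pos_subset hγ) (S.Δ_mem_Φ haΔ) hγa hγnea
    -- γ - a is a positive root with coordinates c - 1_a
    set d : E → ℝ := fun x => (c x : ℝ) - (if x = a then (1:ℝ) else 0) with hd
    have hdsum : γ - a = ∑ δ ∈ S.Δ, d δ • δ := by
      rw [hd]
      have : ∑ δ ∈ S.Δ, ((c δ : ℝ) - if δ = a then (1:ℝ) else 0) • δ
          = ∑ δ ∈ S.Δ, (c δ : ℝ) • δ - ∑ δ ∈ S.Δ, (if δ = a then (1:ℝ) else 0) • δ := by
        rw [← Finset.sum_sub_distrib]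
        apply Finset.sum_congr rfl
        intro x hx
        rw [sub_smul]
      rw [this, ← hc, hind]
    have hsubpos : γ - a ∈ S.pos := by
      by_contra hcon3
      have hneg := S.neg_mem_pos hsub hcon3
      obtain ⟨e, he⟩ := S.pos_decomp _ hneg
      have heq : γ - a = ∑ δ ∈ S.Δ, (-(e δ : ℝ)) • δ := by
        rw [← S.neg_sum_smul, ← he, neg_neg]
      have huniq := S.Δ_coords_unique d (fun δ => -(e δ : ℝ))
        (by rw [← hdsum, ← heq]) b1 (hBΔ hb1B)
      have h2 : d b1 = -(e b1 : ℝ) := huniq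
      have hbne : b1 ≠ a := fun h => hAB_disj a haA (h ▸ hb1B)
      have h3 : d b1 = (c b1 : ℝ) := by rw [hd]; simp [hbne]
      have h4 : (0:ℝ) ≤ (e b1 : ℝ) := Nat.cast_nonneg _
      have h5 : 0 < (c b1 : ℝ) := by exact_mod_cast Nat.pos_of_ne_zero hb1
      rw [h3] at h2
      linarith
    obtain ⟨e, he⟩ := S.pos_decomp _ hsubpos
    have hde : ∀ δ ∈ S.Δ, d δ = (e δ : ℝ) :=
      S.Δ_coords_unique d (fun δ => (e δ : ℝ)) (by rw [← hdsum, ← he])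
    -- f decreases
    have hfl : S.fl (γ - a) < S.fl γ := by
      rw [map_sub]
      have := S.fl_pos (S.Δ_subset haΔ)
      linarith
    have hih := ih (γ - a) hsubpos hfl e he
    rcases hih with hpureA | hpureB
    · -- γ - a is supported on B, hence γA = a and c a = 1
      have hca1 : (c a : ℝ) = 1 := by
        have h1 := hde a haΔ
        have h2 := hpureA a haA
        rw [h2] at h1
        have h3 : d a = (c a : ℝ) - 1 := by rw [hd]; simp
        rw [h3] at h1
        push_cast at h1
        linarith
      have hcother : ∀ x ∈ A, x ≠ a → c x = 0 := by
        intro x hxA hxne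
        have h1 := hde x (hAΔ hxA)
        have h2 := hpureA x hxA
        rw [h2] at h1
        have : d x = (c x : ℝ) := by rw [hd]; simp [hxne]
        rw [this] at h1
        exact_mod_cast h1
      have hγAa : γA = a := by
        rw [hγA]
        rw [Finset.sum_eq_single a]
        · rw [hca1, one_smul]
        · intro b hb hbne
          rw [hcother b hb hbne]; simp
        · intro h; exact absurd haA h
      -- now ⟪γ, a⟫ = ⟪a, a⟫, so γ - 2a is a root with mixed coordinates
      have hγBa : ⟪γB, a⟫ = 0 := by
        rw [hγB, sum_inner]
        apply Finset.sum_eq_zero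
        intro b hbB
        rw [real_inner_smul_left, real_inner_comm, hAB a haA b hbB]
        ring
      have hγa2 : ⟪a, γ⟫ = ⟪a, a⟫ := by
        rw [real_inner_comm, hsplit, inner_add_left, hγAa, hγBa, add_zero]
      have hrefl := S.reflection_mem a (S.Δ_mem_Φ haΔ) γ (S.pos_subset hγ)
      have haa : ⟪a, a⟫ ≠ 0 := ne_of_gt (S.inner_self_pos' (S.Δ_mem_Φ haΔ))
      rw [hγa2] at hrefl
      rw [show 2 * ⟪a, a⟫ / ⟪a, a⟫ = 2 from by field_simp] at hrefl
      -- coordinates of γ - 2a are mixed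
      set g : E → ℝ := fun x => (c x : ℝ) - 2 * (if x = a then (1:ℝ) else 0) with hg
      have hgsum : ∑ δ ∈ S.Δ, g δ • δ = γ - (2:ℝ) • a := by
        rw [hg]
        have h1 : ∑ δ ∈ S.Δ, ((c δ : ℝ) - 2 * (if δ = a then (1:ℝ) else 0)) • δ
            = ∑ δ ∈ S.Δ, (c δ : ℝ) • δ
              - (2:ℝ) • ∑ δ ∈ S.Δ, (if δ = a then (1:ℝ) else 0) • δ := by
          rw [Finset.smul_sum, ← Finset.sum_sub_distrib]
          apply Finset.sum_congr rfl
          intro x hx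
          rw [sub_smul, smul_smul]
        rw [h1, ← hc, hind]
      have hmixed := S.not_root_mixed g (hBΔ hb1B) haΔ
        (by
          have hbne : b1 ≠ a := fun h => hAB_disj a haA (h ▸ hb1B)
          rw [hg]
          simp only [if_neg hbne, mul_zero, sub_zero]
          exact_mod_cast Nat.pos_of_ne_zero hb1)
        (by rw [hg]; simp only [if_pos rfl, mul_one]; rw [hca1]; norm_num)
      apply hmixed
      rw [hgsum]
      exact hrefl
    · -- γ - a is supported on A; but its B-coordinates contain c b1 > 0
      have h1 := hde b1 (hBΔ hb1B)
      have h2 := hpureB b1 hb1B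
      rw [h2] at h1
      have hbne : b1 ≠ a := fun h => hAB_disj a haA (h ▸ hb1B)
      have h3 : d b1 = (c b1 : ℝ) := by rw [hd]; simp [hbne]
      rw [h3] at h1
      exact hb1 (by exact_mod_cast h1)
  -- B is empty, by irreducibility
  have hBempty : B = ∅ := by
    by_contra hcon
    obtain ⟨b0, hb0⟩ := Finset.nonempty_of_ne_empty hcon
    classical
    set Sset : Finset E := S.Φ.filter (fun γ => ∀ b ∈ B, ⟪γ, b⟫ = 0) with hSset
    have hSsub : Sset ⊆ S.Φ := Finset.filter_subset _ _
    have horth : ∀ γ ∈ Sset, ∀ δ ∈ S.Φ, δ ∉ Sset → ⟪γ, δ⟫ = 0 := by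
      intro γ hγS δ hδΦ hδnS
      have hγB : ∀ b ∈ B, ⟪γ, b⟫ = 0 := (Finset.mem_filter.1 hγS).2
      -- reduce to a positive root δ'
      have key : ∀ δ' ∈ S.pos, (∃ b ∈ B, ⟪δ', b⟫ ≠ 0) → ⟪γ, δ'⟫ = 0 := by
        intro δ' hδ' hnonorth
        obtain ⟨c, hc⟩ := S.pos_decomp δ' hδ'
        rcases hsep δ' hδ' c hc with hpureA | hpureB
        · -- supported on B
          rw [hc, inner_sum]
          apply Finset.sum_eq_zero
          intro x hxΔ
          by_cases hxB : x ∈ B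
          · rw [real_inner_smul_right, hγB x hxB]; ring
          · have hxA : x ∈ A := by
              rw [hA, Finset.mem_filter]
              refine ⟨hxΔ, ?_⟩
              intro h0
              exact hxB (by rw [hB, Finset.mem_filter]; exact ⟨hxΔ, h0⟩)
            rw [real_inner_smul_right]
            rw [show c x = 0 from hpureA x hxA]
            simp
        · -- supported on A: contradicts non-orthogonality to B
          exfalso
          obtain ⟨b, hbB, hb⟩ := hnonorth
          apply hb
          rw [hc, sum_inner]
          apply Finset.sum_eq_zero
          intro x hxΔ
          by_cases hxB : x ∈ B
          · rw [show c x = 0 from hpureB x hxB]; simp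
          · have hxA : x ∈ A := by
              rw [hA, Finset.mem_filter]
              refine ⟨hxΔ, ?_⟩
              intro h0
              exact hxB (by rw [hB, Finset.mem_filter]; exact ⟨hxΔ, h0⟩)
            rw [real_inner_smul_left, hAB x hxA b hbB]
            ring
      have hδexists : ∃ b ∈ B, ⟪δ, b⟫ ≠ 0 := by
        by_contra hcon2
        push_neg at hcon2
        exact hδnS (Finset.mem_filter.2 ⟨hδΦ, hcon2⟩)
      rcases S.mem_pos_or_neg hδΦ with hp | hp
      · exact key δ hp hδexists
      · have h1 : ⟪γ, -δ⟫ = 0 := by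
          apply key (-δ) hp
          obtain ⟨b, hbB, hb⟩ := hδexists
          refine ⟨b, hbB, ?_⟩
          rw [inner_neg_left]
          simpa using hb
        rw [inner_neg_right] at h1
        linarith
    have hθS : S.θ ∈ Sset := by
      rw [hSset, Finset.mem_filter]
      refine ⟨S.θ_mem_Φ, ?_⟩
      intro b hbB
      rw [hnθ, sum_inner]
      apply Finset.sum_eq_zero
      intro x hxΔ
      by_cases hxB : x ∈ B
      · by_cases hxb : x = b
        · subst hxb
          rw [show nθ x = 0 from (Finset.mem_filter.1 hxB).2]
          simp
        · rw [show nθ x = 0 from (Finset.mem_filter.1 hxB).2]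
          simp
      · have hxA : x ∈ A := by
          rw [hA, Finset.mem_filter]
          refine ⟨hxΔ, ?_⟩
          intro h0
          exact hxB (by rw [hB, Finset.mem_filter]; exact ⟨hxΔ, h0⟩)
        rw [real_inner_smul_left, hAB x hxA b hbB]
        ring
    rcases S.irreducible Sset hSsub horth with h | h
    · rw [h] at hθS; exact absurd hθS (Finset.notMem_empty _)
    · have hb0' : b0 ∈ Sset := by rw [h]; exact S.Δ_mem_Φ (hBΔ hb0)
      have := (Finset.mem_filter.1 hb0').2 b0 hb0
      exact absurd ((inner_self_eq_zero (𝕜 := ℝ)).1 this)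
        (S.root_ne_zero (S.Δ_mem_Φ (hBΔ hb0)))
  -- conclusion: full support, so ⟪θ, β⟫ > 0
  have hfull : ∀ γ ∈ S.Δ, nθ γ ≠ 0 := by
    intro γ hγ h0
    have : γ ∈ B := by rw [hB, Finset.mem_filter]; exact ⟨hγ, h0⟩
    rw [hBempty] at this
    exact Finset.notMem_empty _ this
  obtain ⟨c, hc⟩ := S.pos_decomp β hβ
  have hβpos : 0 < ⟪β, β⟫ := S.inner_self_pos' (S.pos_subset hβ)
  have hexists : ∃ γ ∈ S.Δ, 0 < ⟪β, γ⟫ := by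
    by_contra hcon
    push_neg at hcon
    have : ⟪β, β⟫ ≤ 0 := by
      conv_lhs => rw [show ⟪β, β⟫ = ⟪β, ∑ γ ∈ S.Δ, (c γ : ℝ) • γ⟫ from by rw [← hc]]
      rw [inner_sum]
      apply Finset.sum_nonpos
      intro γ hγ
      rw [real_inner_smul_right]
      exact mul_nonpos_of_nonneg_of_nonpos (Nat.cast_nonneg _) (hcon γ hγ)
    linarith
  obtain ⟨γ1, hγ1, hγ1pos⟩ := hexists
  rw [hnθ, sum_inner]
  apply Finset.sum_pos'
  · intro γ hγ
    rw [real_inner_smul_left]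
    apply mul_nonneg (Nat.cast_nonneg _)
    rw [real_inner_comm]
    exact hdom γ hγ
  · refine ⟨γ1, hγ1, ?_⟩
    rw [real_inner_smul_left]
    apply mul_pos
    · exact_mod_cast Nat.pos_of_ne_zero (hfull γ1 hγ1)
    · rw [real_inner_comm]; exact hγ1pos

/-- The bound: `⟪ρ, β⟫ ≤ ⟪ρ, θ⟫` for every root `β`. -/
lemma rho_inner_le_theta {β : E} (hβ : β ∈ S.Φ) : ⟪S.ρ, β⟫ ≤ ⟪S.ρ, S.θ⟫ := by
  classical
  -- take a maximizer over positive roots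
  obtain ⟨β0, hβ0, hmax⟩ := S.pos.exists_max_image (fun b => ⟪S.ρ, b⟫) ⟨S.θ, S.θ_mem_pos⟩
  -- β0 is dominant
  have hdom : ∀ α ∈ S.Δ, 0 ≤ ⟪β0, α⟫ := by
    intro α hα
    by_contra hcon
    push_neg at hcon
    have hne : β0 ≠ -α := by
      intro h
      have h1 := hβ0
      rw [h] at h1
      exact S.neg_not_pos (S.Δ_subset hα) h1
    have hadd := S.root_add_root (S.pos_subset hβ0) (S.Δ_mem_Φ hα) hcon hne
    have haddpos : β0 + α ∈ S.pos := by
      apply (S.pos_iff hadd).2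
      rw [map_add]
      have := S.fl_pos hβ0
      have := S.fl_pos (S.Δ_subset hα)
      linarith
    have h1 := hmax _ haddpos
    rw [inner_add_right] at h1
    have := S.rho_inner_simple_pos hα
    linarith
  have hθβ0 : 0 < ⟪S.θ, β0⟫ := S.pos_dominant_inner_pos hβ0 hdom
  -- β0 = θ
  have hβ0θ : β0 = S.θ := by
    by_contra hne
    have hsub := S.root_sub_root S.θ_mem_Φ (S.pos_subset hβ0) hθβ0 (fun h => hne h.symm)
    rcases S.mem_pos_or_neg hsub with h | h
    · have h1 := S.rho_pos_inner h
      have h2 : ⟪S.ρ, S.θ⟫ = ⟪S.ρ, β0⟫ + ⟪S.ρ, S.θ - β0⟫ := by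
        rw [← inner_add_right]
        congr 1
        abel
      have h3 := hmax _ S.θ_mem_pos
      linarith
    · rw [neg_sub] at h
      have := S.θ_highest _ h
      rw [show S.θ + (β0 - S.θ) = β0 from by abel] at this
      exact this (S.pos_subset hβ0)
  rcases S.mem_pos_or_neg hβ with hp | hp
  · rw [← hβ0θ]
    exact hmax _ hp
  · have h1 := S.rho_pos_inner hp
    rw [inner_neg_right] at h1
    have h2 := S.rho_pos_inner S.θ_mem_pos
    linarith

lemma abs_rho_inner_le {β : E} (hβ : β ∈ S.Φ) : |⟪S.ρ, β⟫| ≤ ⟪S.ρ, S.θ⟫ := by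
  rw [abs_le]
  constructor
  · have := S.rho_inner_le_theta (S.neg_mem β hβ)
    rw [inner_neg_right] at this
    linarith
  · exact S.rho_inner_le_theta hβ

end RootSystemData
namespace RootSystemData

variable (S : RootSystemData E)

/-- If `u` is in the Weyl group and fixes `ρ`, then `u` preserves the positive roots. -/
lemma pos_preserved {u : E ≃ₗ[ℝ] E} (hu : u ∈ S.W) (hρ : u S.ρ = S.ρ) :
    ∀ β ∈ S.pos, u β ∈ S.pos := by
  classical
  by_contra hcon
  push_neg at hcon
  obtain ⟨β0, hβ0, hβ0n⟩ := hcon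
  set P := S.pos.filter (fun β => u β ∈ S.pos) with hP
  set N := S.pos.filter (fun β => u β ∉ S.pos) with hN
  have hβ0N : β0 ∈ N := Finset.mem_filter.2 ⟨hβ0, hβ0n⟩
  have hsum0 : (∑ β ∈ S.pos, β : E) = (2:ℝ) • S.ρ := by
    rw [ρ, smul_smul]
    norm_num
  have hsum1 : ∑ β ∈ S.pos, u β = ∑ β ∈ S.pos, β := by
    rw [← map_sum, hsum0, map_smul, hρ]
  have hsplit1 : ∑ β ∈ S.pos, u β = (∑ β ∈ P, u β) + ∑ β ∈ N, u β := by
    rw [hP, hN]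
    exact (Finset.sum_filter_add_sum_filter_not S.pos _ _).symm
  -- the images
  set Q := P.image (fun β => u β) with hQ
  set R := N.image (fun β => -(u β)) with hR
  have hQsub : Q ⊆ S.pos := by
    intro x hx
    obtain ⟨β, hβ, rfl⟩ := Finset.mem_image.1 hx
    exact (Finset.mem_filter.1 hβ).2
  have hRsub : R ⊆ S.pos := by
    intro x hx
    obtain ⟨β, hβ, rfl⟩ := Finset.mem_image.1 hx
    have h1 := Finset.mem_filter.1 hβ
    exact S.neg_mem_pos (S.W_root hu (S.pos_subset h1.1)) h1.2
  have hdisj : Disjoint Q R := by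
    rw [Finset.disjoint_left]
    intro x hxQ hxR
    obtain ⟨β1, hβ1, he1⟩ := Finset.mem_image.1 hxQ
    obtain ⟨β2, hβ2, he2⟩ := Finset.mem_image.1 hxR
    have h1 : u β1 = -(u β2) := by rw [he1, he2]
    have h2 : u β1 = u (-β2) := by rw [map_neg]; exact h1
    have h3 : β1 = -β2 := u.injective h2
    have hb1 := (Finset.mem_filter.1 hβ1).1
    have hb2 := (Finset.mem_filter.1 hβ2).1
    rw [h3] at hb1
    exact S.neg_not_pos hb2 hb1
  have hQcard : Q.card = P.card := Finset.card_image_of_injOn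
    (fun a _ b _ h => u.injective h)
  have hRcard : R.card = N.card := Finset.card_image_of_injOn
    (fun a _ b _ h => u.injective (neg_injective h))
  have hPN : P.card + N.card = S.pos.card := by
    rw [hP, hN]
    exact Finset.card_filter_add_card_filter_not _
  have hunion : Q ∪ R = S.pos := by
    apply Finset.eq_of_subset_of_card_le (Finset.union_subset hQsub hRsub)
    rw [Finset.card_union_of_disjoint hdisj, hQcard, hRcard, hPN]
  have hsplit2 : (∑ β ∈ S.pos, β : E) = (∑ β ∈ P, u β) - ∑ β ∈ N, u β := by
    rw [← hunion, Finset.sum_union hdisj, hQ, hR]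
    rw [Finset.sum_image (fun a _ b _ h => u.injective h)]
    rw [Finset.sum_image (fun a _ b _ h => u.injective (neg_injective h))]
    rw [Finset.sum_neg_distrib]
    abel
  have hNzero : (∑ β ∈ N, u β : E) = 0 := by
    have := hsplit1.symm.trans (hsum1.trans hsplit2)
    have h2 : (∑ β ∈ N, u β) + ∑ β ∈ N, u β = 0 := by
      have h3 := congrArg (fun x => x - ((∑ β ∈ P, u β) - ∑ β ∈ N, u β)) this
      rw [sub_self] at h3
      rw [← h3]
      abel
    have h4 := congrArg (fun x => (2⁻¹ : ℝ) • x) h2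
    simp only [smul_add, smul_zero] at h4
    rw [← two_smul ℝ] at h2
    have h5 : ((2:ℝ))⁻¹ • ((2:ℝ) • (∑ β ∈ N, u β)) = 0 := by
      rw [h2, smul_zero]
    rw [smul_smul] at h5
    norm_num at h5
    exact h5
  have hlt : S.fl (∑ β ∈ N, u β) < 0 := by
    rw [map_sum]
    apply Finset.sum_neg
    · intro β hβ
      have h1 := Finset.mem_filter.1 hβ
      exact S.fl_neg_of_not_pos (S.W_root hu (S.pos_subset h1.1)) h1.2
    · exact ⟨β0, hβ0N⟩
  rw [hNzero, map_zero] at hlt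
  exact lt_irrefl _ hlt

/-- The set of simple reflections. -/
def SimpleRefl : Set (E ≃ₗ[ℝ] E) := {w | ∃ α ∈ S.Δ, w = rE α}

/-- The subgroup generated by the simple reflections. -/
def W' : Subgroup (E ≃ₗ[ℝ] E) := Subgroup.closure S.SimpleRefl

lemma W'_le_W : S.W' ≤ S.W := by
  apply (Subgroup.closure_le _).2
  rintro w ⟨α, hα, rfl⟩
  exact S.rE_mem_W (S.Δ_mem_Φ hα)

/-- Every positive root can be carried into a simple root by the subgroup generated by
simple reflections. -/
lemma exists_simple_image : ∀ β ∈ S.pos, ∃ u ∈ S.W', u β ∈ S.Δ := by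
  apply S.pos_induction
  intro β hβ ih
  by_cases hD : β ∈ S.Δ
  · exact ⟨1, Subgroup.one_mem _, hD⟩
  · obtain ⟨c, hc⟩ := S.pos_decomp β hβ
    have hβΦ := S.pos_subset hβ
    have hexists : ∃ α ∈ S.Δ, 0 < ⟪α, β⟫ := by
      by_contra hcon
      push_neg at hcon
      have h1 : ⟪β, β⟫ ≤ 0 := by
        conv_lhs => rw [show ⟪β, β⟫ = ⟪∑ γ ∈ S.Δ, (c γ : ℝ) • γ, β⟫ from by rw [← hc]]
        rw [sum_inner]
        apply Finset.sum_nonpos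
        intro γ hγ
        rw [real_inner_smul_left]
        exact mul_nonpos_of_nonneg_of_nonpos (Nat.cast_nonneg _) (hcon γ hγ)
      have := S.inner_self_pos' hβΦ
      linarith
    obtain ⟨α, hα, hip⟩ := hexists
    have hne : β ≠ α := fun h => hD (h ▸ hα)
    have hrpos : rE α β ∈ S.pos := S.rE_simple_pos hα hβ hne
    have hflless : S.fl (rE α β) < S.fl β := by
      rw [rE_apply, map_sub, map_smul, smul_eq_mul]
      have h1 : 0 < 2 * ⟪α, β⟫ / ⟪α, α⟫ := by
        apply div_pos (by linarith) (S.inner_self_pos' (S.Δ_mem_Φ hα))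
      have h2 := S.fl_pos (S.Δ_subset hα)
      nlinarith
    obtain ⟨u, hu, huβ⟩ := ih (rE α β) hrpos hflless
    refine ⟨u * rE α, ?_, ?_⟩
    · exact Subgroup.mul_mem _ hu (Subgroup.subset_closure ⟨α, hα, rfl⟩)
    · rw [mul_apply']
      exact huβ

lemma W_le_W' : S.W ≤ S.W' := by
  apply (Subgroup.closure_le _).2
  rintro w ⟨γ, hγ, hw⟩
  have hwe : w = rE γ := LinearEquiv.ext fun x => by rw [hw x]; rfl
  subst hwe
  -- reduce to positive γ
  have key : ∀ γ' ∈ S.pos, rE γ' ∈ S.W' := by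
    intro γ' hγ'
    obtain ⟨u, hu, huγ⟩ := S.exists_simple_image γ' hγ'
    have huW : u ∈ S.W := S.W'_le_W hu
    have hconj := S.rE_conj huW γ' (S.pos_subset hγ')
    have h1 : rE γ' = u⁻¹ * rE (u γ') * u := by
      rw [hconj]
      group
    rw [h1]
    apply Subgroup.mul_mem
    apply Subgroup.mul_mem
    · exact Subgroup.inv_mem _ hu
    · exact Subgroup.subset_closure ⟨u γ', huγ, rfl⟩
    · exact hu
  rcases S.mem_pos_or_neg hγ with h | h
  · exact key γ h
  · rw [← rE_neg γ]
    exact key (-γ) h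

/-- Members of `W'` are products of lists of simple reflections. -/
lemma mem_W'_list {u : E ≃ₗ[ℝ] E} (hu : u ∈ S.W') :
    ∃ L : List (E ≃ₗ[ℝ] E), (∀ e ∈ L, e ∈ S.SimpleRefl) ∧ L.prod = u := by
  have hinv : ∀ x ∈ Submonoid.closure S.SimpleRefl, x⁻¹ ∈ Submonoid.closure S.SimpleRefl := by
    intro x hx
    induction hx using Submonoid.closure_induction with
    | mem y hy =>
      obtain ⟨α, hα, rfl⟩ := hy
      rw [rE_inv]
      exact Submonoid.subset_closure ⟨α, hα, rfl⟩
    | one =>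
      rw [inv_one]
      exact Submonoid.one_mem _
    | mul a b ha hb iha ihb =>
      rw [mul_inv_rev]
      exact Submonoid.mul_mem _ ihb iha
  set K : Subgroup (E ≃ₗ[ℝ] E) :=
    { carrier := Submonoid.closure S.SimpleRefl
      one_mem' := Submonoid.one_mem _
      mul_mem' := fun ha hb => Submonoid.mul_mem _ ha hb
      inv_mem' := fun ha => hinv _ ha } with hK
  have hle : S.W' ≤ K := (Subgroup.closure_le _).2 (fun x hx => Submonoid.subset_closure hx)
  exact Submonoid.exists_list_of_mem_closure (hle hu)

lemma list_prod_W' {L : List (E ≃ₗ[ℝ] E)} (hL : ∀ e ∈ L, e ∈ S.SimpleRefl) :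
    L.prod ∈ S.W' :=
  Subgroup.list_prod_mem _ (fun x hx => Subgroup.subset_closure (hL x hx))

/-- The deletion step: if a word in simple reflections sends the positive root `β` out of
the positive roots, the word absorbs the reflection `rE β`. -/
lemma word_split : ∀ (M : List (E ≃ₗ[ℝ] E)), (∀ e ∈ M, e ∈ S.SimpleRefl) →
    ∀ β ∈ S.pos, M.prod β ∉ S.pos →
    ∃ M₁ M₂ : List (E ≃ₗ[ℝ] E), (∀ e ∈ M₁, e ∈ S.SimpleRefl) ∧
      (∀ e ∈ M₂, e ∈ S.SimpleRefl) ∧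
      M.length = M₁.length + M₂.length + 1 ∧
      M.prod = M₁.prod * M₂.prod * rE β := by
  intro M
  induction M with
  | nil =>
    intro _ β hβ hneg
    exfalso
    exact hneg (by simpa using hβ)
  | cons s M' ih =>
    intro hall β hβ hneg
    have hs : s ∈ S.SimpleRefl := hall s List.mem_cons_self
    have hM' : ∀ e ∈ M', e ∈ S.SimpleRefl := fun e he => hall e (List.mem_cons_of_mem s he)
    by_cases hM'β : M'.prod β ∈ S.pos
    · -- the change of sign happens at s
      obtain ⟨δ, hδ, rfl⟩ := hs
      have hβδ : M'.prod β = δ := by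
        by_contra hne
        apply hneg
        rw [List.prod_cons, mul_apply']
        exact S.rE_simple_pos hδ hM'β hne
      have hM'W : M'.prod ∈ S.W := S.W'_le_W (S.list_prod_W' hM')
      have hconj := S.rE_conj hM'W β (S.pos_subset hβ)
      rw [hβδ] at hconj
      -- rE δ = M'.prod * rE β * (M'.prod)⁻¹
      refine ⟨[], M', by intro e he; exact absurd he List.not_mem_nil, hM', by simp, ?_⟩
      rw [List.prod_cons, List.prod_nil, one_mul, hconj]
      group
    · obtain ⟨M₁, M₂, h1, h2, h3, h4⟩ := ih hM' β hβ hM'β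
      refine ⟨s :: M₁, M₂, ?_, h2, ?_, ?_⟩
      · intro e he
        rcases List.mem_cons.1 he with h | h
        · rw [h]; exact hs
        · exact h1 e h
      · simp only [List.length_cons, h3]
        omega
      · rw [List.prod_cons, List.prod_cons, h4]
        group

/-- An element of the Weyl group preserving the positive roots is the identity. -/
lemma eq_one_of_pos_preserved {u : E ≃ₗ[ℝ] E} (hu : u ∈ S.W)
    (hpos : ∀ β ∈ S.pos, u β ∈ S.pos) : u = 1 := by
  classical
  have hu' : u ∈ S.W' := S.W_le_W' hu
  obtain ⟨L0, hL0, hL0p⟩ := S.mem_W'_list hu'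
  have hex : ∃ n, ∃ L : List (E ≃ₗ[ℝ] E),
      (∀ e ∈ L, e ∈ S.SimpleRefl) ∧ L.prod = u ∧ L.length = n :=
    ⟨L0.length, L0, hL0, hL0p, rfl⟩
  obtain ⟨L, hL, hLp, hLn⟩ := Nat.find_spec hex
  rcases List.eq_nil_or_concat L with hnil | ⟨M, s, hcat⟩
  · rw [hnil] at hLp
    rw [← hLp]
    rfl
  · exfalso
    subst hcat
    have hs : s ∈ S.SimpleRefl := hL s (by simp)
    obtain ⟨γ, hγ, rfl⟩ := hs
    have hM : ∀ e ∈ M, e ∈ S.SimpleRefl := fun e he => hL e (by simp [he])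
    have hprod : u = M.prod * rE γ := by
      rw [← hLp, List.concat_eq_append, List.prod_append, List.prod_cons, List.prod_nil, mul_one]
    have hγpos := S.Δ_subset hγ
    have huγ : u γ ∈ S.pos := hpos γ hγpos
    have hMγ : M.prod γ = -(u γ) := by
      rw [hprod, mul_apply', S.rE_self (S.Δ_mem_Φ hγ), map_neg, neg_neg]
    have hMγneg : M.prod γ ∉ S.pos := by
      rw [hMγ]
      exact S.neg_not_pos huγ
    obtain ⟨M₁, M₂, h1, h2, h3, h4⟩ := S.word_split M hM γ hγpos hMγneg
    have hushort : u = (M₁ ++ M₂).prod := by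
      rw [hprod, h4, List.prod_append]
      have := rE_mul_self γ
      calc M₁.prod * M₂.prod * rE γ * rE γ
          = M₁.prod * M₂.prod * (rE γ * rE γ) := by group
        _ = M₁.prod * M₂.prod := by rw [this, mul_one]
    have hlen : (M₁ ++ M₂).length < Nat.find hex := by
      rw [← hLn, List.length_concat, List.length_append, h3]
      omega
    apply Nat.find_min hex hlen
    refine ⟨M₁ ++ M₂, ?_, hushort.symm, rfl⟩
    intro e he
    rcases List.mem_append.1 he with h | h
    · exact h1 e h
    · exact h2 e h

/-- The stabilizer of `ρ` in the Weyl group is trivial. -/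
lemma eq_one_of_fixes_rho {u : E ≃ₗ[ℝ] E} (hu : u ∈ S.W) (hρ : u S.ρ = S.ρ) : u = 1 :=
  S.eq_one_of_pos_preserved hu (S.pos_preserved hu hρ)

end RootSystemData
/-- **Weyl orbit points of `ρ` stay distinct modulo `kΓ`** (Statement 9).
If `|k| > 2⟪ρ, θ⟫` (equivalently `|k| > 2(h^∨ − 1)`), then for all distinct `w, w'` in
the Weyl group, `w(ρ) − w'(ρ) ∉ kΓ`; that is, the points `w · 0 = w(ρ) − ρ` remain
pairwise distinct modulo the lattice `kΓ`. -/
theorem weyl_rho_orbit_distinct_mod_lattice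
    (S : RootSystemData E) (k : ℝ) (hk : 2 * ⟪S.ρ, S.θ⟫ < |k|) :
    ∀ w ∈ S.W, ∀ w' ∈ S.W, w ≠ w' →
      ¬ ∃ l ∈ S.coweights, w S.ρ - w' S.ρ = k • l := by
  intro w hw w' hw' hne
  rintro ⟨l, hl, heq⟩
  by_cases hl0 : l = 0
  · subst hl0
    rw [smul_zero, sub_eq_zero] at heq
    have hmem : w'⁻¹ * w ∈ S.W := Subgroup.mul_mem _ (Subgroup.inv_mem _ hw') hw
    have hfix : (w'⁻¹ * w) S.ρ = S.ρ := by
      show w'⁻¹ (w S.ρ) = S.ρ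
      rw [heq]
      have h1 : w'⁻¹ (w' S.ρ) = S.ρ := w'.symm_apply_apply S.ρ
      exact h1
    have h2 := S.eq_one_of_fixes_rho hmem hfix
    exact hne (inv_mul_eq_one.1 h2).symm
  · -- l ≠ 0 : derive a contradiction from the size bound
    have hα : ∃ α ∈ S.Φ, ⟪α, l⟫ ≠ 0 := by
      by_contra hcon
      push_neg at hcon
      have hall : ∀ x ∈ Submodule.span ℝ (S.Φ : Set E), ⟪x, l⟫ = 0 := by
        intro x hx
        induction hx using Submodule.span_induction with
        | mem y hy => exact hcon y hy
        | zero => rw [inner_zero_left]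
        | add a b _ _ iha ihb => rw [inner_add_left, iha, ihb, add_zero]
        | smul c a _ iha => rw [real_inner_smul_left, iha, mul_zero]
      have h0 : ⟪l, l⟫ = 0 := hall l (by rw [S.span_eq_top]; exact Submodule.mem_top)
      exact hl0 ((inner_self_eq_zero (𝕜 := ℝ)).1 h0)
    obtain ⟨α, hαΦ, hαl⟩ := hα
    obtain ⟨n, hn⟩ := hl α hαΦ
    have hn0 : n ≠ 0 := by
      rintro rfl
      rw [hn] at hαl
      exact hαl (by norm_num)
    have hn1 : (1:ℝ) ≤ |(n:ℝ)| := by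
      have : (1:ℤ) ≤ |n| := by
        rcases lt_or_gt_of_ne hn0 with h | h
        · rw [abs_of_neg h]; omega
        · rw [abs_of_pos h]; omega
      calc (1:ℝ) ≤ (|n| : ℤ) := by exact_mod_cast this
        _ = |(n:ℝ)| := by push_cast; ring
    -- the pairing with α is large
    have hlarge : |k| ≤ |⟪α, w S.ρ - w' S.ρ⟫| := by
      rw [heq, real_inner_smul_right, hn, abs_mul]
      nlinarith [abs_nonneg k]
    -- but it is bounded by 2⟪ρ,θ⟫
    have hb : ∀ v : E ≃ₗ[ℝ] E, v ∈ S.W → |⟪α, v S.ρ⟫| ≤ ⟪S.ρ, S.θ⟫ := by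
      intro v hv
      have hvinv : v⁻¹ ∈ S.W := Subgroup.inv_mem _ hv
      have hα' : v⁻¹ α ∈ S.Φ := S.W_root hvinv hαΦ
      have he : ⟪α, v S.ρ⟫ = ⟪v⁻¹ α, S.ρ⟫ := by
        have h := S.W_inner hv (v⁻¹ α) S.ρ
        have e : v (v⁻¹ α) = α := v.apply_symm_apply α
        rw [e] at h
        exact h
      rw [he, real_inner_comm S.ρ (v⁻¹ α)]
      exact S.abs_rho_inner_le hα'
    have hsmall : |⟪α, w S.ρ - w' S.ρ⟫| ≤ 2 * ⟪S.ρ, S.θ⟫ := by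
      rw [inner_sub_right]
      have h1 := hb w hw
      have h2 := hb w' hw'
      have := abs_sub (⟪α, w S.ρ⟫) (⟪α, w' S.ρ⟫)
      calc |⟪α, w S.ρ⟫ - ⟪α, w' S.ρ⟫| ≤ |⟪α, w S.ρ⟫| + |⟪α, w' S.ρ⟫| := abs_sub _ _
        _ ≤ 2 * ⟪S.ρ, S.θ⟫ := by linarith
    linarith

end S9
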